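/- Let X be an infinite set and f : X → X a surjective function such that there is at most one point x ∈ X with the fiber f⁻¹(x) having exactly one element. Then for any a ∈ X, the iterated preimage set T_∞(f,a) = {a} ∪ f⁻¹(a) ∪ f⁻²(a) ∪ ⋯ either has exactly one element or is infinite. -/
import Mathlib


/-- Let `X` be an infinite set and `f : X → X` a surjective function such
that there is at most one point `x ∈ X` whose fiber `f⁻¹(x)` has exactly one element.
Then for any `a ∈ X`, the iterated preimage set `T_∞(f,a) = ⋃ₙ f⁻ⁿ(a)` either has exactly
one element (namely it equals `{a}`) or is infinite. -/
theorem stmt_0 {X : Type*} [Infinite X] (f : X → X) (hf : Function.Surjective f)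
    (h1 : {x : X | ∃! z : X, f z = x}.Subsingleton) (a : X) :
    {x : X | ∃ n : ℕ, f^[n] x = a} = {a} ∨ {x : X | ∃ n : ℕ, f^[n] x = a}.Infinite := by
  set T : Set X := {x : X | ∃ n : ℕ, f^[n] x = a} with hT
  by_cases hInf : T.Infinite
  · exact Or.inr hInf
  left
  have hfin : T.Finite := Set.not_infinite.mp hInf
  have haT : a ∈ T := ⟨0, rfl⟩
  -- preimage of T is contained in T
  have hpre : ∀ z : X, f z ∈ T → z ∈ T := by
    rintro z ⟨n, hn⟩
    exact ⟨n + 1, by rwa [Function.iterate_succ_apply]⟩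
  set S : Set X := f ⁻¹' T with hS
  have hST : S ⊆ T := fun z hz => hpre z hz
  have hSfin : S.Finite := hfin.subset hST
  -- f maps S onto T
  have hsurj : Set.SurjOn f S T := by
    intro x hx
    obtain ⟨z, hz⟩ := hf x
    exact ⟨z, by simpa [hS, hz] using hx, hz⟩
  have hle : T.ncard ≤ S.ncard :=
    le_trans (Set.ncard_le_ncard hsurj (hSfin.image f)) (Set.ncard_image_le hSfin)
  have hSeq : S = T := Set.eq_of_subset_of_ncard_le hST hle hfin
  -- f maps T into T and onto T, hence bijectively
  have hmaps : Set.MapsTo f T T := fun x hx => by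
    have : x ∈ S := hSeq ▸ hx
    exact this
  have hbij : Set.BijOn f T T :=
    (hfin.surjOn_iff_bijOn_of_mapsTo hmaps).mp (hSeq ▸ hsurj)
  -- every point of T has a unique preimage
  have hsub : T ⊆ {x : X | ∃! z : X, f z = x} := by
    intro x hx
    obtain ⟨z, hzS, hz⟩ := hsurj hx
    refine ⟨z, hz, fun y hy => ?_⟩
    have hyT : y ∈ T := hpre y (by rwa [hy])
    exact hbij.injOn hyT (hST hzS) (hy.trans hz.symm)
  have : T.Subsingleton := h1.anti hsub
  ext x
  simp only [Set.mem_singleton_iff]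
  exact ⟨fun hx => this hx haT, fun hx => hx ▸ haT⟩
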